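/- Let $h \in (0,4)$, and suppose $u_0 \in (-2,0)$ and $u_1 \in (0,\infty)$ satisfy $(u_0+2)^2 e^{-u_0} = 4-h$ and $(u_1+2)^2 e^{-u_1} = 4-h$. Then $\int_{u_0}^{u_1} u\, e^{-u} \sqrt{(u+2)^2 - (4-h)e^{u}}\, du = 0$. -/

import Mathlib

open Real Set MeasureTheory intervalIntegral

private noncomputable def gfun (u : ℝ) : ℝ := (u + 2) ^ 2 * Real.exp (-u)
private noncomputable def Gfun (c x : ℝ) : ℝ :=
  2 * x * Real.sqrt (4 - c - x ^ 2) / Real.sqrt (4 - x ^ 2)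
private noncomputable def sfun (ε u : ℝ) : ℝ := ε * Real.sqrt (4 - gfun u)
private noncomputable def dfun (ε u : ℝ) : ℝ :=
  u * (u + 2) * Real.exp (-u) / (2 * sfun ε u)

private lemma gfun_hasDerivAt (u : ℝ) :
    HasDerivAt gfun (-(u * (u + 2) * Real.exp (-u))) u := by
  have h1 : HasDerivAt (fun u : ℝ => (u + 2) ^ 2) (2 * (u + 2)) u := by
    simpa using (((hasDerivAt_id u).add_const 2).fun_pow 2)
  have h2 : HasDerivAt (fun u : ℝ => Real.exp (-u)) (-Real.exp (-u)) u := by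
    simpa using ((hasDerivAt_id u).neg).exp
  have := h1.fun_mul h2
  exact this.congr_deriv (by ring)

private lemma gfun_cont : Continuous gfun := by
  unfold gfun; fun_prop

private lemma lv_subst (c a b ε : ℝ) (hab : a < b) (ha2 : (-2 : ℝ) < a)
    (hε : ε = 1 ∨ ε = -1)
    (hg4 : ∀ u ∈ Ioo a b, gfun u < 4)
    (hkey : ∀ u ∈ Icc a b, u = 0 ∨ gfun u < 4) :
    (∫ u in a..b, u * Real.exp (-u) * Real.sqrt ((u + 2) ^ 2 - c * Real.exp u))
      = ∫ x in (ε * Real.sqrt (4 - gfun a))..(ε * Real.sqrt (4 - gfun b)), Gfun c x := by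
  have hεne : ε ≠ 0 := by rcases hε with rfl | rfl <;> norm_num
  have hε2 : ε ^ 2 = 1 := by rcases hε with rfl | rfl <;> norm_num
  have hgle : ∀ u ∈ Icc a b, gfun u ≤ 4 := by
    intro u hu
    rcases hkey u hu with h0 | hlt
    · subst h0; simp [gfun]; norm_num
    · exact hlt.le
  have hgpos : ∀ u ∈ Icc a b, 0 < gfun u := by
    intro u hu
    have : 0 < u + 2 := by linarith [hu.1]
    have := Real.exp_pos (-u)
    unfold gfun; positivity
  have hs_sq : ∀ u ∈ Icc a b, (sfun ε u) ^ 2 = 4 - gfun u := by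
    intro u hu
    have h4 : 0 ≤ 4 - gfun u := by linarith [hgle u hu]
    rw [sfun, mul_pow, hε2, one_mul, Real.sq_sqrt h4]
  have hs_cont : Continuous (sfun ε) := by
    unfold sfun
    exact continuous_const.mul ((continuous_const.sub gfun_cont).sqrt)
  -- pointwise identity
  have hEq : EqOn (fun u => u * Real.exp (-u) * Real.sqrt ((u + 2) ^ 2 - c * Real.exp u))
      (fun u => dfun ε u • ((Gfun c) ∘ (sfun ε)) u) (Icc a b) := by
    intro u hu
    simp only [smul_eq_mul, Function.comp_apply]
    rcases hkey u hu with h0 | hlt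
    · subst h0; simp [dfun]
    · have h2 : 0 < u + 2 := by linarith [hu.1]
      have h4 : 0 < 4 - gfun u := by linarith
      have hsne : sfun ε u ≠ 0 :=
        mul_ne_zero hεne (Real.sqrt_ne_zero'.2 h4)
      have hsq : Real.sqrt (4 - (sfun ε u) ^ 2) = Real.sqrt (gfun u) := by
        rw [hs_sq u hu]; ring_nf
      have hc : 4 - c - (sfun ε u) ^ 2 = gfun u - c := by
        rw [hs_sq u hu]; ring
      have hexp : Real.sqrt (gfun u) = (u + 2) * Real.sqrt (Real.exp (-u)) := by
        rw [gfun, Real.sqrt_mul (sq_nonneg _), Real.sqrt_sq h2.le]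
      have hgc : gfun u - c = ((u + 2) ^ 2 - c * Real.exp u) * Real.exp (-u) := by
        rw [gfun, Real.exp_neg]
        field_simp
      have hsgc : Real.sqrt (gfun u - c)
          = Real.sqrt ((u + 2) ^ 2 - c * Real.exp u) * Real.sqrt (Real.exp (-u)) := by
        rw [hgc, Real.sqrt_mul' _ (Real.exp_pos _).le]
      have hse : Real.sqrt (Real.exp (-u)) ≠ 0 := by
        positivity
      rw [dfun, Gfun, hc, hsq, hsgc, hexp]
      have hEexp : Real.sqrt (Real.exp (-u)) * Real.sqrt (Real.exp (-u)) = Real.exp (-u) :=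
        Real.mul_self_sqrt (Real.exp_pos _).le
      field_simp
  have huIcc : uIcc a b = Icc a b := uIcc_of_le hab.le
  rw [intervalIntegral.integral_congr (by rw [huIcc]; exact hEq)]
  have hmin : min a b = a := min_eq_left hab.le
  have hmax : max a b = b := max_eq_right hab.le
  have hface : sfun ε a = ε * Real.sqrt (4 - gfun a) := rfl
  have := intervalIntegral.integral_comp_smul_deriv''' (a := a) (b := b)
    (f := sfun ε) (f' := dfun ε) (g := Gfun c)
    (hs_cont.continuousOn)
    ?_ ?_ ?_ ?_
  · exact this
  -- derivative
  · intro x hx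
    rw [hmin, hmax] at hx
    have h4 : 0 < 4 - gfun x := by linarith [hg4 x hx]
    have hd : HasDerivAt (fun u => 4 - gfun u) (x * (x + 2) * Real.exp (-x)) x := by
      simpa using (gfun_hasDerivAt x).const_sub 4
    have hds := (hd.sqrt h4.ne').const_mul ε
    have hval : ε * (x * (x + 2) * Real.exp (-x) / (2 * Real.sqrt (4 - gfun x))) = dfun ε x := by
      rw [dfun, sfun]
      rcases hε with rfl | rfl
      · simp
      · rw [show (2 : ℝ) * (-1 * Real.sqrt (4 - gfun x)) = -(2 * Real.sqrt (4 - gfun x)) by ring,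
          div_neg]
        ring
    rw [hval] at hds
    exact (hds.hasDerivWithinAt)
  -- continuity of G on image of Ioo
  · rw [hmin, hmax]
    apply ContinuousOn.div
    · fun_prop
    · exact (Continuous.continuousOn (by fun_prop)).sqrt
    · rintro y ⟨u, hu, rfl⟩
      have h4 : 0 < 4 - (sfun ε u) ^ 2 := by
        rw [hs_sq u (Ioo_subset_Icc_self hu)]
        have := hgpos u (Ioo_subset_Icc_self hu)
        linarith
      exact Real.sqrt_ne_zero'.2 h4
  -- integrability of G on image of Icc
  · have hcomp : IsCompact ((sfun ε) '' uIcc a b) := (isCompact_uIcc.image hs_cont)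
    apply ContinuousOn.integrableOn_compact hcomp
    apply ContinuousOn.div
    · fun_prop
    · exact (Continuous.continuousOn (by fun_prop)).sqrt
    · rintro y ⟨u, hu, rfl⟩
      rw [huIcc] at hu
      have h4 : 0 < 4 - (sfun ε u) ^ 2 := by
        rw [hs_sq u hu]
        have := hgpos u hu
        linarith
      exact Real.sqrt_ne_zero'.2 h4
  -- integrability of the substituted integrand
  · rw [huIcc]
    have hFc : Continuous (fun u : ℝ => u * Real.exp (-u) *
        Real.sqrt ((u + 2) ^ 2 - c * Real.exp u)) := by fun_prop
    exact (hFc.integrableOn_Icc).congr_fun hEq measurableSet_Icc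

theorem lv_abelian_integral_zero
    (h : ℝ) (hh : h ∈ Set.Ioo (0 : ℝ) 4)
    (u₀ u₁ : ℝ) (hu₀ : u₀ ∈ Set.Ioo (-2 : ℝ) 0) (hu₁ : u₁ ∈ Set.Ioi (0 : ℝ))
    (he₀ : (u₀ + 2) ^ 2 * Real.exp (-u₀) = 4 - h)
    (he₁ : (u₁ + 2) ^ 2 * Real.exp (-u₁) = 4 - h) :
    ∫ u in u₀..u₁, u * Real.exp (-u) *
      Real.sqrt ((u + 2) ^ 2 - (4 - h) * Real.exp u) = 0 := by
  obtain ⟨hh0, hh4⟩ := hh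
  obtain ⟨hu₀2, hu₀0⟩ := hu₀
  have hu₁0 : 0 < u₁ := hu₁
  have hg0 : gfun 0 = 4 := by simp [gfun]; norm_num
  have hge₀ : gfun u₀ = 4 - h := he₀
  have hge₁ : gfun u₁ = 4 - h := he₁
  -- monotonicity
  have hderiv : ∀ x : ℝ, deriv gfun x = -(x * (x + 2) * Real.exp (-x)) :=
    fun x => (gfun_hasDerivAt x).deriv
  have hmono : StrictMonoOn gfun (Icc (-2 : ℝ) 0) := by
    apply strictMonoOn_of_deriv_pos (convex_Icc _ _) gfun_cont.continuousOn
    intro x hx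
    rw [interior_Icc] at hx
    obtain ⟨hx1, hx2⟩ := hx
    rw [hderiv]
    have := Real.exp_pos (-x)
    nlinarith [mul_pos (mul_pos (neg_pos.2 hx2) (show (0:ℝ) < x + 2 by linarith)) this]
  have hanti : StrictAntiOn gfun (Icc (0 : ℝ) u₁) := by
    apply strictAntiOn_of_deriv_neg (convex_Icc _ _) gfun_cont.continuousOn
    intro x hx
    rw [interior_Icc] at hx
    obtain ⟨hx1, hx2⟩ := hx
    rw [hderiv]
    have := Real.exp_pos (-x)
    nlinarith [mul_pos (mul_pos hx1 (show (0:ℝ) < x + 2 by linarith)) this]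
  have hg4L : ∀ u ∈ Ico u₀ 0, gfun u < 4 := by
    intro u hu
    have := hmono ⟨by linarith [hu.1], hu.2.le⟩ ⟨by norm_num, le_refl 0⟩ hu.2
    rwa [hg0] at this
  have hg4R : ∀ u ∈ Ioc (0 : ℝ) u₁, gfun u < 4 := by
    intro u hu
    have := hanti ⟨le_refl 0, hu₁0.le⟩ ⟨hu.1.le, hu.2⟩ hu.1
    rwa [hg0] at this
  have hL := lv_subst (4 - h) u₀ 0 (-1) hu₀0 hu₀2 (Or.inr rfl)
    (fun u hu => hg4L u ⟨hu.1.le, hu.2⟩)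
    (fun u hu => by
      rcases eq_or_lt_of_le hu.2 with h0 | hlt
      · exact Or.inl h0
      · exact Or.inr (hg4L u ⟨hu.1, hlt⟩))
  have hR := lv_subst (4 - h) 0 u₁ 1 hu₁0 (by norm_num) (Or.inl rfl)
    (fun u hu => hg4R u ⟨hu.1, hu.2.le⟩)
    (fun u hu => by
      rcases eq_or_lt_of_le hu.1 with h0 | hlt
      · exact Or.inl h0.symm
      · exact Or.inr (hg4R u ⟨hlt, hu.2⟩))
  rw [hge₀, hg0] at hL
  rw [hge₁, hg0] at hR
  have h44 : (4 : ℝ) - 4 = 0 := by norm_num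
  have h4h : (4 : ℝ) - (4 - h) = h := by ring
  rw [h44, h4h, Real.sqrt_zero, mul_zero] at hL hR
  rw [one_mul] at hR
  -- combine
  have hFc : Continuous (fun u : ℝ => u * Real.exp (-u) *
      Real.sqrt ((u + 2) ^ 2 - (4 - h) * Real.exp u)) := by fun_prop
  have hi1 : IntervalIntegrable (fun u : ℝ => u * Real.exp (-u) *
      Real.sqrt ((u + 2) ^ 2 - (4 - h) * Real.exp u)) volume u₀ 0 :=
    hFc.intervalIntegrable u₀ 0
  have hi2 : IntervalIntegrable (fun u : ℝ => u * Real.exp (-u) *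
      Real.sqrt ((u + 2) ^ 2 - (4 - h) * Real.exp u)) volume 0 u₁ :=
    hFc.intervalIntegrable 0 u₁
  have hsplit := intervalIntegral.integral_add_adjacent_intervals hi1 hi2
  -- odd symmetry of Gfun
  have hodd : (∫ x in (-(Real.sqrt h))..(0:ℝ), Gfun (4 - h) x)
      = - ∫ x in (0:ℝ)..(Real.sqrt h), Gfun (4 - h) x := by
    have hcomp := intervalIntegral.integral_comp_neg (a := (0:ℝ)) (b := Real.sqrt h)
      (f := Gfun (4 - h))
    rw [neg_zero] at hcomp
    rw [← hcomp]
    have : ∀ x : ℝ, Gfun (4 - h) (-x) = - Gfun (4 - h) x := by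
      intro x
      simp only [Gfun, neg_sq]
      ring
    simp only [this]
    rw [intervalIntegral.integral_neg]
  have : (-1 : ℝ) * Real.sqrt h = -(Real.sqrt h) := by ring
  rw [this] at hL
  rw [← hsplit, hL, hR, hodd]
  ring
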